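/- arXiv:2101.09751 — 2 statements merged into one kernel-verified Lean document; each statement's English description precedes it below -/
import Mathlib

section
/- If X is a binomial random variable with parameters n and p, λ = np, and ρ(x) = (1+x)log(1+x) - x for x ≥ -1 (with ρ(x) = ∞ for x < -1), then for all t ≥ 0, P(X ≤ E[X] - t) ≤ exp(-λ ρ(-t/λ)) ≤ exp(-t²/(2λ)). -/
open scoped Classical

/-- Weight of an outcome `ω` of `n` independent Bernoulli(p) trials. -/
noncomputable def binWeight (n : ℕ) (p : ℝ) (ω : Fin n → Bool) : ℝ :=
  ∏ i, if ω i then p else 1 - p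

/-- Probability of an event in the binomial model `B(n,p)`. -/
noncomputable def binProb (n : ℕ) (p : ℝ) (E : (Fin n → Bool) → Prop) : ℝ :=
  ∑ ω : Fin n → Bool, if E ω then binWeight n p ω else 0

/-- The number of successes in the outcome `ω`. -/
def binCount {n : ℕ} (ω : Fin n → Bool) : ℕ :=
  (Finset.univ.filter fun i => ω i = true).card

/-- `ρ(x) = (1+x)log(1+x) - x` for `x ≥ -1`. -/
noncomputable def rho (x : ℝ) : ℝ := (1 + x) * Real.log (1 + x) - x

lemma binWeight_nonneg (n : ℕ) (p : ℝ) (hp0 : 0 ≤ p) (hp1 : p ≤ 1) (ω : Fin n → Bool) :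
    0 ≤ binWeight n p ω := by
  refine Finset.prod_nonneg fun i _ => ?_
  split <;> linarith

/-- MGF computation. -/
lemma bin_mgf (n : ℕ) (p s : ℝ) :
    ∑ ω : Fin n → Bool, binWeight n p ω * Real.exp (-(s * (binCount ω : ℝ))) =
      (p * Real.exp (-s) + (1 - p)) ^ n := by
  have key : ∀ ω : Fin n → Bool,
      binWeight n p ω * Real.exp (-(s * (binCount ω : ℝ))) =
        ∏ i, (if ω i then p * Real.exp (-s) else 1 - p) := by
    intro ω
    have hc : (binCount ω : ℝ) = ∑ i, (if ω i then (1 : ℝ) else 0) := by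
      rw [binCount, Finset.card_filter]
      push_cast
      rfl
    have hsum : -(s * (binCount ω : ℝ)) = ∑ i, -(s * (if ω i then (1 : ℝ) else 0)) := by
      rw [hc, Finset.mul_sum, ← Finset.sum_neg_distrib]
    rw [binWeight, hsum, Real.exp_sum, ← Finset.prod_mul_distrib]
    refine Finset.prod_congr rfl fun i _ => ?_
    cases h : ω i <;> simp
  rw [Finset.sum_congr rfl fun ω _ => key ω]
  have := Fintype.sum_pow (fun b : Bool => if b then p * Real.exp (-s) else 1 - p) n
  norm_num [Fintype.sum_bool] at this
  rw [← this]


lemma bin_markov (n : ℕ) (p s c : ℝ) (hp0 : 0 ≤ p) (hp1 : p ≤ 1) (hs : 0 ≤ s) :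
    binProb n p (fun ω => (binCount ω : ℝ) ≤ c) ≤
      Real.exp (s * c) * (p * Real.exp (-s) + (1 - p)) ^ n := by
  rw [← bin_mgf, binProb, Finset.mul_sum]
  refine Finset.sum_le_sum fun ω _ => ?_
  have hw := binWeight_nonneg n p hp0 hp1 ω
  by_cases h : (binCount ω : ℝ) ≤ c
  · rw [if_pos h]
    have h1 : (1 : ℝ) ≤ Real.exp (s * (c - (binCount ω : ℝ))) :=
      Real.one_le_exp (by nlinarith)
    have h2 : Real.exp (s * (c - (binCount ω : ℝ))) =
        Real.exp (s * c) * Real.exp (-(s * (binCount ω : ℝ))) := by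
      rw [← Real.exp_add]; ring_nf
    calc binWeight n p ω = binWeight n p ω * 1 := (mul_one _).symm
      _ ≤ binWeight n p ω * Real.exp (s * (c - (binCount ω : ℝ))) :=
          mul_le_mul_of_nonneg_left h1 hw
      _ = Real.exp (s * c) * (binWeight n p ω * Real.exp (-(s * (binCount ω : ℝ)))) := by
          rw [h2]; ring
  · rw [if_neg h]
    have := Real.exp_nonneg (-(s * (binCount ω : ℝ)))
    positivity

lemma rho_lower {x : ℝ} (h1 : -1 ≤ x) (h0 : x ≤ 0) : x ^ 2 / 2 ≤ rho x := by
  rcases eq_or_lt_of_le h1 with heq | hlt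
  · rw [← heq]; norm_num [rho]
  · set u := 1 + x with hu
    have hu0 : 0 < u := by simp only [hu]; linarith
    have hu1 : u ≤ 1 := by simp only [hu]; linarith
    set f : ℝ → ℝ := fun v => v * Real.log v - (v - 1) - (v - 1) ^ 2 / 2 with hf
    have hder : ∀ v : ℝ, v ≠ 0 → HasDerivAt f (Real.log v - v + 1) v := by
      intro v hv
      have hd1 := Real.hasDerivAt_mul_log hv
      have hd2 : HasDerivAt (fun v : ℝ => v - 1) 1 v := (hasDerivAt_id v).sub_const 1
      have hd3 : HasDerivAt (fun v : ℝ => (v - 1) ^ 2 / 2) (v - 1) v := by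
        have := (hd2.fun_pow 2).div_const 2
        refine this.congr_deriv ?_
        push_cast; ring
      have := (hd1.sub hd2).sub hd3
      refine this.congr_deriv ?_
      ring
    have hanti : AntitoneOn f (Set.Icc u 1) := by
      apply antitoneOn_of_deriv_nonpos (convex_Icc u 1)
      · have : Continuous f := by
          apply (Real.continuous_mul_log.sub (continuous_id.sub continuous_const)).sub
          fun_prop
        exact this.continuousOn
      · intro v hv
        rw [interior_Icc] at hv
        exact (hder v (by linarith [hv.1])).differentiableAt.differentiableWithinAt
      · intro v hv
        rw [interior_Icc] at hv
        have hv0 : 0 < v := lt_trans hu0 hv.1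
        rw [(hder v hv0.ne').deriv]
        have := Real.log_le_sub_one_of_pos hv0
        linarith
    have hineq : f 1 ≤ f u :=
      hanti (Set.mem_Icc.mpr ⟨le_refl u, hu1⟩) (Set.mem_Icc.mpr ⟨hu1, le_refl 1⟩) hu1
    have hf1 : f 1 = 0 := by simp [hf]
    have hfu : f u = u * Real.log u - (u - 1) - (u - 1) ^ 2 / 2 := rfl
    rw [rho, ← hu]
    have hux : u - 1 = x := by rw [hu]; ring
    rw [hf1, hfu, hux] at hineq
    linarith

/-- Chernoff's inequality, lower tail: if `X ∈ B(n,p)`, `λ = np`, then for `t ≥ 0`,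
`P(X ≤ E[X] - t) ≤ exp(-λ ρ(-t/λ)) ≤ exp(-t²/(2λ))`, where `ρ(x) = ∞` for `x < -1`
(so the middle quantity is `0` in that case, `exp(-∞) = 0`). -/
theorem chernoff_lower (n : ℕ) (p t lam : ℝ) (hn : 0 < n) (hp0 : 0 < p) (hp1 : p ≤ 1)
    (ht : 0 ≤ t) (hlam : lam = n * p) :
    binProb n p (fun ω => (binCount ω : ℝ) ≤ (n : ℝ) * p - t) ≤
        (if (-1 : ℝ) ≤ -t / lam then Real.exp (-(lam * rho (-t / lam))) else 0) ∧
      (if (-1 : ℝ) ≤ -t / lam then Real.exp (-(lam * rho (-t / lam))) else 0) ≤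
        Real.exp (-(t ^ 2 / (2 * lam))) := by
  have hn' : (0 : ℝ) < n := Nat.cast_pos.mpr hn
  have hlam0 : 0 < lam := by rw [hlam]; positivity
  have hnp : (n : ℝ) * p = lam := hlam.symm
  have hcond : ((-1 : ℝ) ≤ -t / lam) ↔ t ≤ lam := by
    rw [neg_div, neg_le_neg_iff, div_le_one hlam0]
  by_cases hA : t ≤ lam
  · rw [if_pos (hcond.mpr hA)]
    constructor
    · -- first inequality
      rcases eq_or_lt_of_le hA with heq | hlt
      · -- t = lam
        subst heq
        have hx : -t / t = -1 := by
          rw [neg_div, div_self hlam0.ne']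
        have hrho : rho (-t / t) = 1 := by
          rw [hx, rho]; norm_num
        have hev : binProb n p (fun ω => (binCount ω : ℝ) ≤ (n : ℝ) * p - t) = (1 - p) ^ n := by
          rw [binProb]
          rw [Finset.sum_eq_single (fun _ => false)]
          · have : binCount (fun _ : Fin n => false) = 0 := by
              simp [binCount]
            rw [if_pos (by rw [this, hnp]; simp), binWeight]
            simp [Finset.prod_const]
          · intro b _ hb
            have : ∃ i, b i = true := by
              by_contra hc
              push_neg at hc
              exact hb (funext fun i => by simpa using hc i)
            obtain ⟨i, hi⟩ := this
            have hcnt : 1 ≤ binCount b := by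
              rw [binCount]
              refine Finset.card_pos.mpr ⟨i, ?_⟩
              simp [hi]
            rw [if_neg]
            rw [hnp]
            push_neg
            have : (1 : ℝ) ≤ (binCount b : ℝ) := by exact_mod_cast hcnt
            linarith
          · intro h
            exact absurd (Finset.mem_univ _) h
        rw [hev, hrho, mul_one]
        have h1p : 1 - p ≤ Real.exp (-p) := by
          linarith [Real.add_one_le_exp (-p)]
        calc (1 - p) ^ n ≤ Real.exp (-p) ^ n :=
              pow_le_pow_left₀ (by linarith) h1p n
          _ = Real.exp ((n : ℝ) * (-p)) := (Real.exp_nat_mul _ n).symm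
          _ = Real.exp (-t) := by rw [hlam]; ring_nf
      · -- t < lam
        set u : ℝ := (lam - t) / lam with hu
        have hu0 : 0 < u := div_pos (by linarith) hlam0
        have hu1 : u ≤ 1 := by
          rw [hu, div_le_one hlam0]; linarith
        set s : ℝ := -Real.log u with hs
        have hs0 : 0 ≤ s := by
          rw [hs, neg_nonneg]
          exact Real.log_nonpos hu0.le hu1
        have hexp : Real.exp (-s) = u := by
          rw [hs, neg_neg, Real.exp_log hu0]
        have hlu : lam * u = lam - t := by
          rw [hu]; field_simp
        have hx : 1 + -t / lam = u := by
          rw [hu]; field_simp; ring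
        calc binProb n p (fun ω => (binCount ω : ℝ) ≤ (n : ℝ) * p - t)
            ≤ Real.exp (s * ((n : ℝ) * p - t)) * (p * Real.exp (-s) + (1 - p)) ^ n :=
              bin_markov n p s _ hp0.le hp1 hs0
          _ ≤ Real.exp (s * (lam - t)) * Real.exp (lam * (u - 1)) := by
              rw [hnp, hexp]
              gcongr
              have hb : p * u + (1 - p) ≤ Real.exp (p * (u - 1)) := by
                have := Real.add_one_le_exp (p * (u - 1))
                linarith
              calc (p * u + (1 - p)) ^ n ≤ Real.exp (p * (u - 1)) ^ n := by
                    apply pow_le_pow_left₀ (by nlinarith) hb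
                _ = Real.exp ((n : ℝ) * (p * (u - 1))) := (Real.exp_nat_mul _ n).symm
                _ = Real.exp (lam * (u - 1)) := by rw [hlam]; ring_nf
          _ = Real.exp (-(lam * rho (-t / lam))) := by
              rw [← Real.exp_add]
              congr 1
              rw [rho, hx, hs]
              have hx' : -t / lam = u - 1 := by rw [hu]; field_simp; ring
              rw [hx']
              linear_combination (Real.log u) * hlu
    · -- second inequality
      rw [Real.exp_le_exp, neg_le_neg_iff]
      have hx1 : (-1 : ℝ) ≤ -t / lam := hcond.mpr hA
      have hx0 : -t / lam ≤ 0 := by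
        rw [neg_div, neg_nonpos]
        exact div_nonneg ht hlam0.le
      have hr := rho_lower hx1 hx0
      have heq : t ^ 2 / (2 * lam) = lam * ((-t / lam) ^ 2 / 2) := by
        field_simp
      rw [heq]
      exact mul_le_mul_of_nonneg_left hr hlam0.le
  · rw [if_neg (fun h => hA (hcond.mp h))]
    constructor
    · apply le_of_eq
      rw [binProb]
      apply Finset.sum_eq_zero
      intro ω _
      rw [if_neg]
      rw [hnp]
      push_neg
      calc lam - t < 0 := by linarith [hA]
        _ ≤ (binCount ω : ℝ) := Nat.cast_nonneg _
    · positivity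
end

section
/- If p = p(n) ≥ n^{-1/9}·(log n)², then a.a.s. every set of n^{1/9} vertices of D ∈ D(n,p) induces a subdigraph containing a directed cycle; consequently a.a.s. the largest acyclic induced subdigraph of D has fewer than n^{1/9} vertices. -/
open scoped Classical
set_option maxHeartbeats 1000000

/-- Weight of a digraph `D` on `[n]` in the model `D(n,p)`: each ordered pair of
distinct vertices is an arc independently with probability `p`; loops are forbidden
(outcomes with a loop get weight `0`). -/
noncomputable def arcWeight (n : ℕ) (p : ℝ) (D : Fin n → Fin n → Bool) : ℝ :=
  ∏ u, ∏ v, if u = v then (if D u v then 0 else 1) else (if D u v then p else 1 - p)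

/-- Probability of an event in the random digraph model `D(n,p)`. -/
noncomputable def digraphProb (n : ℕ) (p : ℝ) (E : (Fin n → Fin n → Bool) → Prop) : ℝ :=
  ∑ D : Fin n → Fin n → Bool, if E D then arcWeight n p D else 0

/-- Expectation of a random variable in the random digraph model `D(n,p)`. -/
noncomputable def digraphExp (n : ℕ) (p : ℝ) (X : (Fin n → Fin n → Bool) → ℝ) : ℝ :=
  ∑ D : Fin n → Fin n → Bool, arcWeight n p D * X D

/-- The set of neighbours of `v`: vertices `u ≠ v` joined to `v` by an arc in at
least one direction. -/
def nbhd {n : ℕ} (D : Fin n → Fin n → Bool) (v : Fin n) : Finset (Fin n) :=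
  Finset.univ.filter fun u => u ≠ v ∧ (D u v = true ∨ D v u = true)

/-- The subdigraph of `D` induced by `S` contains a directed cycle. -/
def hasCycleIn {n : ℕ} (D : Fin n → Fin n → Bool) (S : Finset (Fin n)) : Prop :=
  ∃ m : ℕ, ∃ φ : Fin (m + 2) → Fin n, Function.Injective φ ∧
    (∀ i, φ i ∈ S) ∧ ∀ i, D (φ i) (φ (i + 1)) = true


/-- single-coordinate weight -/
noncomputable def w (n : ℕ) (p : ℝ) (q : Fin n × Fin n) (b : Bool) : ℝ :=
  if q.1 = q.2 then (if b then 0 else 1) else (if b then p else 1 - p)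

lemma arcWeight_eq (n : ℕ) (p : ℝ) (D : Fin n → Fin n → Bool) :
    arcWeight n p D = ∏ q : Fin n × Fin n, w n p q (D q.1 q.2) := by
  rw [arcWeight, ← Fintype.prod_prod_type']
  rfl

lemma w_nonneg {n : ℕ} {p : ℝ} (hp0 : 0 ≤ p) (hp1 : p ≤ 1) (q : Fin n × Fin n) (b : Bool) :
    0 ≤ w n p q b := by
  unfold w; split_ifs <;> norm_num <;> linarith

lemma arcWeight_nonneg {n : ℕ} {p : ℝ} (hp0 : 0 ≤ p) (hp1 : p ≤ 1)
    (D : Fin n → Fin n → Bool) : 0 ≤ arcWeight n p D := by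
  rw [arcWeight_eq]
  exact Finset.prod_nonneg fun q _ => w_nonneg hp0 hp1 q _

lemma sum_prod_bool {ι : Type*} [Fintype ι] [DecidableEq ι] (f : ι → Bool → ℝ) :
    ∑ g : ι → Bool, ∏ i, f i (g i) = ∏ i, (f i false + f i true) := by
  have h : ∀ i : ι, f i false + f i true = ∑ b : Bool, f i b := by
    intro i; rw [Fintype.sum_bool]; ring
  rw [Finset.prod_congr rfl fun i _ => h i, Finset.prod_univ_sum, Fintype.piFinset_univ]

lemma digraphProb_pointwise (n : ℕ) (p : ℝ) (P : Fin n × Fin n → Bool → Prop) :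
    digraphProb n p (fun D => ∀ q : Fin n × Fin n, P q (D q.1 q.2)) =
    ∏ q : Fin n × Fin n,
      ((if P q false then w n p q false else 0) + (if P q true then w n p q true else 0)) := by
  unfold digraphProb
  trans (∑ D : Fin n → Fin n → Bool,
      ∏ q : Fin n × Fin n, (if P q (D q.1 q.2) then w n p q (D q.1 q.2) else 0))
  · refine Finset.sum_congr rfl fun D _ => ?_
    by_cases h : ∀ q : Fin n × Fin n, P q (D q.1 q.2)
    · rw [if_pos h, arcWeight_eq]
      exact Finset.prod_congr rfl fun q _ => by rw [if_pos (h q)]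
    · rw [if_neg h]
      push_neg at h
      obtain ⟨q₀, hq₀⟩ := h
      exact (Finset.prod_eq_zero (Finset.mem_univ q₀) (by rw [if_neg hq₀])).symm
  trans (∑ g : Fin n × Fin n → Bool,
      ∏ q : Fin n × Fin n, (if P q (g q) then w n p q (g q) else 0))
  · exact (Fintype.sum_equiv (Equiv.curry (Fin n) (Fin n) Bool)
      (fun g : Fin n × Fin n → Bool =>
        ∏ q : Fin n × Fin n, (if P q (g q) then w n p q (g q) else 0))
      (fun D : Fin n → Fin n → Bool =>
        ∏ q : Fin n × Fin n, (if P q (D q.1 q.2) then w n p q (D q.1 q.2) else 0))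
      (fun g => rfl)).symm
  exact sum_prod_bool (fun q b => if P q b then w n p q b else 0)

lemma digraphProb_all_false {n : ℕ} {p : ℝ} (hp0 : 0 ≤ p) (hp1 : p ≤ 1)
    (A : Finset (Fin n × Fin n)) (hA : ∀ a ∈ A, a.1 ≠ a.2) :
    digraphProb n p (fun D => ∀ a ∈ A, D a.1 a.2 = false) = (1 - p) ^ A.card := by
  have h := digraphProb_pointwise n p (fun q b => q ∈ A → b = false)
  have he : (fun D : Fin n → Fin n → Bool => ∀ q : Fin n × Fin n, q ∈ A → D q.1 q.2 = false)
      = (fun D : Fin n → Fin n → Bool => ∀ a ∈ A, D a.1 a.2 = false) := rfl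
  rw [he] at h
  rw [h]
  trans (∏ q : Fin n × Fin n, if q ∈ A then (1 - p) else 1)
  · refine Finset.prod_congr rfl fun q _ => ?_
    by_cases hq : q ∈ A
    · rw [if_pos (fun _ => rfl), if_neg (by simp [hq]), if_pos hq]
      have := hA q hq
      simp [w, this]
    · rw [if_pos (fun _ => rfl), if_pos (by simp [hq]), if_neg hq]
      unfold w
      by_cases hd : q.1 = q.2 <;> simp [hd]
  rw [Finset.prod_ite_mem, Finset.univ_inter, Finset.prod_const]

lemma digraphProb_congr {n : ℕ} {p : ℝ} {E E' : (Fin n → Fin n → Bool) → Prop}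
    (h : ∀ D, E D ↔ E' D) : digraphProb n p E = digraphProb n p E' := by
  unfold digraphProb
  exact Finset.sum_congr rfl fun D _ => by rw [if_congr (h D) rfl rfl]

lemma digraphProb_true {n : ℕ} {p : ℝ} (hp0 : 0 ≤ p) (hp1 : p ≤ 1) :
    digraphProb n p (fun _ => True) = 1 := by
  have := digraphProb_all_false hp0 hp1 (∅ : Finset (Fin n × Fin n)) (by simp)
  simpa using (digraphProb_congr (E := fun _ => True)
    (E' := fun D => ∀ a ∈ (∅ : Finset (Fin n × Fin n)), D a.1 a.2 = false) (by simp)).trans this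

lemma digraphProb_mono {n : ℕ} {p : ℝ} (hp0 : 0 ≤ p) (hp1 : p ≤ 1)
    {E E' : (Fin n → Fin n → Bool) → Prop} (h : ∀ D, E D → E' D) :
    digraphProb n p E ≤ digraphProb n p E' := by
  apply Finset.sum_le_sum
  intro D _
  by_cases hE : E D
  · rw [if_pos hE, if_pos (h D hE)]
  · rw [if_neg hE]
    split
    · exact arcWeight_nonneg hp0 hp1 D
    · exact le_refl 0

lemma digraphProb_nonneg {n : ℕ} {p : ℝ} (hp0 : 0 ≤ p) (hp1 : p ≤ 1)
    (E : (Fin n → Fin n → Bool) → Prop) : 0 ≤ digraphProb n p E := by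
  apply Finset.sum_nonneg
  intro D _
  split
  · exact arcWeight_nonneg hp0 hp1 D
  · exact le_refl 0

lemma digraphProb_le_one {n : ℕ} {p : ℝ} (hp0 : 0 ≤ p) (hp1 : p ≤ 1)
    (E : (Fin n → Fin n → Bool) → Prop) : digraphProb n p E ≤ 1 := by
  rw [← digraphProb_true (n := n) hp0 hp1]
  exact digraphProb_mono hp0 hp1 fun D _ => trivial

lemma digraphProb_compl {n : ℕ} {p : ℝ} (hp0 : 0 ≤ p) (hp1 : p ≤ 1)
    (E : (Fin n → Fin n → Bool) → Prop) :
    digraphProb n p E = 1 - digraphProb n p (fun D => ¬ E D) := by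
  have : digraphProb n p E + digraphProb n p (fun D => ¬ E D) = 1 := by
    rw [← digraphProb_true (n := n) hp0 hp1]
    unfold digraphProb
    rw [← Finset.sum_add_distrib]
    apply Finset.sum_congr rfl
    intro D _
    by_cases hE : E D <;> simp [hE]
  linarith

lemma digraphProb_union {n : ℕ} {p : ℝ} (hp0 : 0 ≤ p) (hp1 : p ≤ 1)
    {ι : Type*} (s : Finset ι) (E : ι → (Fin n → Fin n → Bool) → Prop) :
    digraphProb n p (fun D => ∃ i ∈ s, E i D) ≤ ∑ i ∈ s, digraphProb n p (E i) := by
  unfold digraphProb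
  rw [Finset.sum_comm]
  apply Finset.sum_le_sum
  intro D _
  by_cases h : ∃ i ∈ s, E i D
  · rw [if_pos h]
    obtain ⟨i₀, hi₀, hEi₀⟩ := h
    calc arcWeight n p D = (if E i₀ D then arcWeight n p D else 0) := by rw [if_pos hEi₀]
      _ ≤ ∑ i ∈ s, (if E i D then arcWeight n p D else 0) := by
          apply Finset.single_le_sum (fun i _ => ?_) hi₀
          split
          · exact arcWeight_nonneg hp0 hp1 D
          · exact le_refl 0
  · rw [if_neg h]
    apply Finset.sum_nonneg
    intro i _
    split
    · exact arcWeight_nonneg hp0 hp1 D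
    · exact le_refl 0




lemma hasCycleIn_mono {n : ℕ} {D : Fin n → Fin n → Bool} {S T : Finset (Fin n)}
    (hST : S ⊆ T) (h : hasCycleIn D S) : hasCycleIn D T := by
  obtain ⟨m, φ, h1, h2, h3⟩ := h
  exact ⟨m, φ, h1, fun i => hST (h2 i), h3⟩

lemma exists_sink {n : ℕ} {D : Fin n → Fin n → Bool} {S : Finset (Fin n)}
    (h : ¬ hasCycleIn D S) (hS : S.Nonempty) :
    ∃ v ∈ S, ∀ u ∈ S, u ≠ v → D v u = false := by
  by_contra hcon
  push_neg at hcon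
  have hout : ∀ v ∈ S, ∃ u, u ∈ S ∧ u ≠ v ∧ D v u = true := by
    intro v hv
    obtain ⟨u, hu, hne, hD⟩ := hcon v hv
    exact ⟨u, hu, hne, by revert hD; cases D v u <;> simp⟩
  choose g hg1 hg2 hg3 using fun v (hv : v ∈ S) => hout v hv
  obtain ⟨v₀, hv₀⟩ := hS
  -- iterate
  have hf : ∃ f : Fin n → Fin n, ∀ v, v ∈ S → (f v ∈ S ∧ f v ≠ v ∧ D v (f v) = true) := by
    refine ⟨fun v => if hv : v ∈ S then g v hv else v, fun v hv => ?_⟩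
    simp only [dif_pos hv]
    exact ⟨hg1 v hv, hg2 v hv, hg3 v hv⟩
  obtain ⟨f, hfS⟩ := hf
  set a : ℕ → Fin n := fun i => f^[i] v₀ with ha
  have haS : ∀ i, a i ∈ S := by
    intro i
    induction i with
    | zero => exact hv₀
    | succ i ih =>
      have : a (i+1) = f (a i) := Function.iterate_succ_apply' f i v₀
      rw [this]
      exact (hfS _ ih).1
  have hstep : ∀ i, a (i+1) = f (a i) := fun i => Function.iterate_succ_apply' f i v₀
  -- pigeonhole
  have hpig : ∃ i j : Fin (n+1), i ≠ j ∧ a i.val = a j.val := by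
    obtain ⟨x, y, hxy, hfe⟩ := Fintype.exists_ne_map_eq_of_card_lt
      (fun i : Fin (n+1) => a i.val) (by simp)
    exact ⟨x, y, hxy, hfe⟩
  have hne : ∃ j, ∃ i, i < j ∧ a i = a j := by
    obtain ⟨x, y, hxy, hfe⟩ := hpig
    rcases lt_or_gt_of_ne (fun h => hxy (Fin.ext h) : (x:ℕ) ≠ (y:ℕ)) with hlt | hgt
    · exact ⟨y, x, hlt, hfe⟩
    · exact ⟨x, y, hgt, hfe.symm⟩
  classical
  let j₀ := Nat.find hne
  obtain ⟨i₀, hij, heq⟩ : ∃ i, i < j₀ ∧ a i = a j₀ := Nat.find_spec hne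
  have hmin : ∀ k l, k < l → l < j₀ → a k ≠ a l := by
    intro k l hkl hl hakl
    exact Nat.find_min hne hl ⟨k, hkl, hakl⟩
  have hinj : ∀ k l, k < j₀ → l < j₀ → a k = a l → k = l := by
    intro k l hk hl hkl
    rcases lt_trichotomy k l with h' | h' | h'
    · exact absurd hkl (hmin k l h' hl)
    · exact h'
    · exact absurd hkl.symm (hmin l k h' hk)
  have hj2 : i₀ + 2 ≤ j₀ := by
    rcases Nat.lt_or_ge j₀ (i₀ + 2) with h' | h'
    · exfalso
      have : j₀ = i₀ + 1 := by omega
      rw [this] at heq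
      have := (hfS _ (haS i₀)).2.1
      rw [← hstep i₀] at this
      exact this heq.symm
    · exact h'
  set m := j₀ - i₀ - 2 with hm
  have hm2 : m + 2 = j₀ - i₀ := by omega
  apply h
  refine ⟨m, fun t => a (i₀ + t.val), ?_, fun t => haS _, ?_⟩
  · intro t s hts
    have ht : i₀ + t.val < j₀ := by have := t.isLt; omega
    have hs : i₀ + s.val < j₀ := by have := s.isLt; omega
    have := hinj _ _ ht hs hts
    exact Fin.ext (by omega)
  · intro t
    rcases Nat.lt_or_ge t.val (m+1) with h' | h'
    · have hval : ((t + 1 : Fin (m+2)) : ℕ) = t.val + 1 := by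
        rw [Fin.val_add_one]
        have : t ≠ Fin.last (m+1) := by
          intro hlast
          rw [hlast] at h'
          simp at h'
        rw [if_neg this]
      show D (a (i₀ + t.val)) (a (i₀ + ((t + 1 : Fin (m+2)) : ℕ))) = true
      rw [hval, show i₀ + (t.val + 1) = (i₀ + t.val) + 1 by omega, hstep]
      exact (hfS _ (haS _)).2.2
    · have hlast : t = Fin.last (m+1) := by
        have := t.isLt
        apply Fin.ext
        simp only [Fin.val_last]
        omega
      have hval : ((t + 1 : Fin (m+2)) : ℕ) = 0 := by
        rw [Fin.val_add_one, if_pos hlast]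
      show D (a (i₀ + t.val)) (a (i₀ + ((t + 1 : Fin (m+2)) : ℕ))) = true
      rw [hval, hlast]
      simp only [Fin.val_last, Nat.add_zero]
      have h1 : i₀ + (m + 1) = j₀ - 1 := by omega
      have h2 : a i₀ = a j₀ := heq
      rw [h1, h2, show j₀ = (j₀ - 1) + 1 by omega, hstep]
      exact (hfS _ (haS _)).2.2

lemma topo_order {n : ℕ} {D : Fin n → Fin n → Bool} :
    ∀ (c : ℕ) (S : Finset (Fin n)), ¬ hasCycleIn D S → S.card = c →
    ∃ σ : Fin c → Fin n, Function.Injective σ ∧ (∀ i, σ i ∈ S) ∧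
      ∀ i j : Fin c, i < j → D (σ j) (σ i) = false := by
  intro c
  induction c with
  | zero =>
    intro S _ _
    exact ⟨Fin.elim0, fun i => i.elim0, fun i => i.elim0, fun i => i.elim0⟩
  | succ c ih =>
    intro S hS hcard
    have hne : S.Nonempty := Finset.card_pos.mp (by omega)
    obtain ⟨v, hv, hsink⟩ := exists_sink hS hne
    have hS' : ¬ hasCycleIn D (S.erase v) :=
      fun h' => hS (hasCycleIn_mono (Finset.erase_subset _ _) h')
    obtain ⟨σ', h1, h2, h3⟩ := ih (S.erase v) hS' (by rw [Finset.card_erase_of_mem hv, hcard]; omega)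
    refine ⟨fun i => if h : (i : ℕ) < c then σ' ⟨i, h⟩ else v, ?_, ?_, ?_⟩
    · intro i j hij
      dsimp only at hij
      by_cases hi : (i : ℕ) < c <;> by_cases hj : (j : ℕ) < c
      · rw [dif_pos hi, dif_pos hj] at hij
        have := h1 hij
        exact Fin.ext (by simpa using congrArg Fin.val this)
      · rw [dif_pos hi, dif_neg hj] at hij
        exact absurd hij (Finset.ne_of_mem_erase (h2 ⟨i, hi⟩))
      · rw [dif_neg hi, dif_pos hj] at hij
        exact absurd hij.symm (Finset.ne_of_mem_erase (h2 ⟨j, hj⟩))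
      · apply Fin.ext
        have := i.isLt; have := j.isLt
        omega
    · intro i
      dsimp only
      by_cases hi : (i : ℕ) < c
      · rw [dif_pos hi]
        exact Finset.mem_of_mem_erase (h2 _)
      · rw [dif_neg hi]; exact hv
    · intro i j hij
      have hi : (i : ℕ) < c := by
        have hj := j.isLt
        have : (i : ℕ) < (j : ℕ) := hij
        omega
      dsimp only
      rw [dif_pos hi]
      by_cases hj : (j : ℕ) < c
      · rw [dif_pos hj]
        exact h3 _ _ (by simpa using hij)
      · rw [dif_neg hj]
        have hmem : σ' ⟨i, hi⟩ ∈ S := Finset.mem_of_mem_erase (h2 _)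
        have hne' : σ' ⟨i, hi⟩ ≠ v := Finset.ne_of_mem_erase (h2 _)
        exact hsink _ hmem hne'

lemma card_filter_lt (k : ℕ) :
    (Finset.univ.filter fun q : Fin k × Fin k => q.1 < q.2).card = ∑ i ∈ Finset.range k, i := by
  rw [Finset.card_eq_sum_card_fiberwise (f := fun q : Fin k × Fin k => q.2)
    (t := Finset.univ) (fun x _ => Finset.mem_univ _)]
  rw [← Fin.sum_univ_eq_sum_range (fun i => i) k]
  apply Finset.sum_congr rfl
  intro j _
  rw [← Fin.card_Iio j]
  apply Finset.card_bij (fun (q : Fin k × Fin k) _ => q.1)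
  · intro q hq
    simp only [Finset.mem_filter, Finset.mem_univ, true_and] at hq
    exact Finset.mem_Iio.mpr (hq.2 ▸ hq.1)
  · intro q hq r hr hqr
    simp only [Finset.mem_filter, Finset.mem_univ, true_and] at hq hr
    exact Prod.ext hqr (hq.2.trans hr.2.symm)
  · intro i hi
    exact ⟨(i, j), Finset.mem_filter.mpr ⟨Finset.mem_filter.mpr
      ⟨Finset.mem_univ _, Finset.mem_Iio.mp hi⟩, rfl⟩, rfl⟩

lemma prob_ordered {n : ℕ} {p : ℝ} (hp0 : 0 ≤ p) (hp1 : p ≤ 1) {k : ℕ}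
    (σ : Fin k → Fin n) (hσ : Function.Injective σ) :
    digraphProb n p (fun D => ∀ i j : Fin k, i < j → D (σ j) (σ i) = false)
      = (1 - p) ^ (∑ i ∈ Finset.range k, i) := by
  set A := (Finset.univ.filter fun q : Fin k × Fin k => q.1 < q.2).image
    (fun q => (σ q.2, σ q.1)) with hA
  have hAcard : A.card = ∑ i ∈ Finset.range k, i := by
    rw [hA, Finset.card_image_of_injOn, card_filter_lt]
    intro q _ r _ hqr
    simp only [Prod.mk.injEq] at hqr
    exact Prod.ext (hσ hqr.2) (hσ hqr.1)
  have hoff : ∀ a ∈ A, a.1 ≠ a.2 := by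
    intro a ha
    simp only [hA, Finset.mem_image, Finset.mem_filter, Finset.mem_univ, true_and] at ha
    obtain ⟨q, hlt, rfl⟩ := ha
    exact fun hc => absurd (hσ hc) (ne_of_gt hlt)
  rw [← hAcard, ← digraphProb_all_false hp0 hp1 A hoff]
  apply digraphProb_congr
  intro D
  constructor
  · intro hD a ha
    simp only [hA, Finset.mem_image, Finset.mem_filter, Finset.mem_univ, true_and] at ha
    obtain ⟨q, hlt, rfl⟩ := ha
    exact hD q.1 q.2 hlt
  · intro hD i j hij
    exact hD (σ j, σ i) (Finset.mem_image.mpr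
      ⟨(i, j), Finset.mem_filter.mpr ⟨Finset.mem_univ _, hij⟩, rfl⟩)

lemma prob_bad {n : ℕ} {p : ℝ} (hp0 : 0 ≤ p) (hp1 : p ≤ 1) (k : ℕ) :
    digraphProb n p (fun D => ∃ S : Finset (Fin n), S.card = k ∧ ¬ hasCycleIn D S)
      ≤ (n : ℝ) ^ k * (1 - p) ^ (∑ i ∈ Finset.range k, i) := by
  set T := (Finset.univ : Finset (Fin k → Fin n)).filter Function.Injective with hT
  have hmono : ∀ D : Fin n → Fin n → Bool,
      (∃ S : Finset (Fin n), S.card = k ∧ ¬ hasCycleIn D S) →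
      ∃ σ ∈ T, ∀ i j : Fin k, i < j → D (σ j) (σ i) = false := by
    rintro D ⟨S, hcard, hnc⟩
    obtain ⟨σ, hinj, _, hfwd⟩ := topo_order k S hnc hcard
    exact ⟨σ, Finset.mem_filter.mpr ⟨Finset.mem_univ _, hinj⟩, hfwd⟩
  have h1 : digraphProb n p (fun D => ∃ S : Finset (Fin n), S.card = k ∧ ¬ hasCycleIn D S)
      ≤ digraphProb n p (fun D => ∃ σ ∈ T, ∀ i j : Fin k, i < j → D (σ j) (σ i) = false) :=
    digraphProb_mono hp0 hp1 hmono
  have h2 := digraphProb_union hp0 hp1 T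
    (fun σ D => ∀ i j : Fin k, i < j → D (σ j) (σ i) = false)
  have h3 : ∑ σ ∈ T, digraphProb n p (fun D => ∀ i j : Fin k, i < j → D (σ j) (σ i) = false)
      = (T.card : ℝ) * (1 - p) ^ (∑ i ∈ Finset.range k, i) := by
    rw [Finset.sum_congr rfl (fun σ hσ => prob_ordered hp0 hp1 σ (Finset.mem_filter.mp hσ).2),
      Finset.sum_const, nsmul_eq_mul]
  have h4 : (T.card : ℝ) ≤ (n : ℝ) ^ k := by
    have : T.card ≤ n ^ k := by
      calc T.card ≤ (Finset.univ : Finset (Fin k → Fin n)).card := Finset.card_filter_le _ _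
        _ = Fintype.card (Fin k → Fin n) := rfl
        _ = n ^ k := by rw [Fintype.card_fun]; simp
    exact_mod_cast this
  calc digraphProb n p (fun D => ∃ S : Finset (Fin n), S.card = k ∧ ¬ hasCycleIn D S)
      ≤ ∑ σ ∈ T, digraphProb n p (fun D => ∀ i j : Fin k, i < j → D (σ j) (σ i) = false) :=
        h1.trans h2
    _ = (T.card : ℝ) * (1 - p) ^ (∑ i ∈ Finset.range k, i) := h3
    _ ≤ (n : ℝ) ^ k * (1 - p) ^ (∑ i ∈ Finset.range k, i) :=
        mul_le_mul_of_nonneg_right h4 (pow_nonneg (by linarith) _)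



open Filter

/-- If `p(n) ≥ n^{-1/9}(log n)²`, then a.a.s. every set of `n^{1/9}` vertices of
`D ∈ D(n,p)` induces a subdigraph containing a directed cycle; consequently a.a.s.
every acyclic induced subdigraph of `D` has fewer than `n^{1/9}` vertices. -/
theorem aas_no_large_acyclic_set (p : ℕ → ℝ) (hp1 : ∀ n : ℕ, p n ≤ 1)
    (hp : ∀ n : ℕ, ((n : ℝ) ^ (-(1 : ℝ) / 9) * (Real.log n) ^ 2 : ℝ) ≤ p n) :
    Tendsto (fun n => digraphProb n (p n) (fun D =>
        (∀ S : Finset (Fin n), S.card = ⌈(n : ℝ) ^ ((1 : ℝ) / 9)⌉₊ → hasCycleIn D S) ∧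
        (∀ S : Finset (Fin n), ¬ hasCycleIn D S → (S.card : ℝ) < (n : ℝ) ^ ((1 : ℝ) / 9))))
      atTop (nhds 1) := by
  have hp0 : ∀ n : ℕ, 0 ≤ p n := fun n => le_trans (by positivity) (hp n)
  have hFG : ∀ (n : ℕ) (D : Fin n → Fin n → Bool),
      (∀ S : Finset (Fin n), S.card = ⌈(n : ℝ) ^ ((1 : ℝ) / 9)⌉₊ → hasCycleIn D S) →
      ((∀ S : Finset (Fin n), S.card = ⌈(n : ℝ) ^ ((1 : ℝ) / 9)⌉₊ → hasCycleIn D S) ∧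
       (∀ S : Finset (Fin n), ¬ hasCycleIn D S → (S.card : ℝ) < (n : ℝ) ^ ((1 : ℝ) / 9))) := by
    intro n D hF
    refine ⟨hF, fun S hS => ?_⟩
    by_contra hcon
    push_neg at hcon
    obtain ⟨T, hTS, hT⟩ := Finset.exists_subset_card_eq (Nat.ceil_le.mpr hcon)
    exact hS (hasCycleIn_mono hTS (hF T hT))
  have hupper : ∀ n : ℕ, digraphProb n (p n) (fun D =>
      (∀ S : Finset (Fin n), S.card = ⌈(n : ℝ) ^ ((1 : ℝ) / 9)⌉₊ → hasCycleIn D S) ∧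
      (∀ S : Finset (Fin n), ¬ hasCycleIn D S → (S.card : ℝ) < (n : ℝ) ^ ((1 : ℝ) / 9))) ≤ 1 :=
    fun n => digraphProb_le_one (hp0 n) (hp1 n) _
  have hlower : ∀ᶠ n : ℕ in atTop, 1 - (n : ℝ)⁻¹ ≤ digraphProb n (p n) (fun D =>
      (∀ S : Finset (Fin n), S.card = ⌈(n : ℝ) ^ ((1 : ℝ) / 9)⌉₊ → hasCycleIn D S) ∧
      (∀ S : Finset (Fin n), ¬ hasCycleIn D S → (S.card : ℝ) < (n : ℝ) ^ ((1 : ℝ) / 9))) := by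
    filter_upwards [eventually_ge_atTop 19683] with n hn
    have hnR : (19683 : ℝ) ≤ (n : ℝ) := by exact_mod_cast hn
    have hn0 : (0 : ℝ) < n := by linarith
    set k := ⌈(n : ℝ) ^ ((1 : ℝ) / 9)⌉₊ with hk
    set L := Real.log n with hL
    set c := ∑ i ∈ Finset.range k, i with hc
    have hL4 : 4 ≤ L := by
      rw [hL, Real.le_log_iff_exp_le hn0]
      have h1 : Real.exp 4 = Real.exp 1 ^ (4 : ℕ) := by
        rw [← Real.exp_nat_mul]; norm_num
      have h2 : Real.exp 1 ^ (4 : ℕ) ≤ (2.7182818286 : ℝ) ^ (4 : ℕ) :=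
        pow_le_pow_left₀ (le_of_lt (Real.exp_pos 1)) (le_of_lt Real.exp_one_lt_d9) 4
      have h3 : (2.7182818286 : ℝ) ^ (4 : ℕ) ≤ 19683 := by norm_num
      linarith [h1.le, h1.ge]
    have hL0 : 0 ≤ L := by linarith
    have hx : (n : ℝ) ^ ((1 : ℝ) / 9) ≤ (k : ℝ) := Nat.le_ceil _
    have hx3 : (3 : ℝ) ≤ (n : ℝ) ^ ((1 : ℝ) / 9) := by
      have h1 : ((19683 : ℝ)) ^ ((1 : ℝ) / 9) ≤ (n : ℝ) ^ ((1 : ℝ) / 9) :=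
        Real.rpow_le_rpow (by norm_num) hnR (by norm_num)
      have h2 : ((19683 : ℝ)) ^ ((1 : ℝ) / 9) = 3 := by
        rw [show (19683 : ℝ) = 3 ^ (9 : ℕ) by norm_num, ← Real.rpow_natCast 3 9,
          ← Real.rpow_mul (by norm_num)]
        norm_num
      linarith
    have hk3' : (3 : ℝ) ≤ (k : ℝ) := le_trans hx3 hx
    have hk3 : 3 ≤ k := by exact_mod_cast hk3'
    have hkp : L ^ 2 ≤ (k : ℝ) * p n := by
      have h1 : (n : ℝ) ^ (-(1 : ℝ) / 9) * L ^ 2 ≤ p n := by rw [hL]; exact hp n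
      have h2 : (n : ℝ) ^ ((1 : ℝ) / 9) * ((n : ℝ) ^ (-(1 : ℝ) / 9)) = 1 := by
        rw [← Real.rpow_add hn0]; norm_num
      have h3 : (n : ℝ) ^ ((1 : ℝ) / 9) * ((n : ℝ) ^ (-(1 : ℝ) / 9) * L ^ 2)
          ≤ (n : ℝ) ^ ((1 : ℝ) / 9) * p n :=
        mul_le_mul_of_nonneg_left h1 (le_of_lt (Real.rpow_pos_of_pos hn0 _))
      have h4 : (n : ℝ) ^ ((1 : ℝ) / 9) * p n ≤ (k : ℝ) * p n :=
        mul_le_mul_of_nonneg_right hx (hp0 n)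
      calc L ^ 2 = (n : ℝ) ^ ((1 : ℝ) / 9) * ((n : ℝ) ^ (-(1 : ℝ) / 9) * L ^ 2) := by
            rw [← mul_assoc, h2, one_mul]
        _ ≤ (k : ℝ) * p n := h3.trans h4
    have h2c : (c : ℝ) * 2 = (k : ℝ) * ((k : ℝ) - 1) := by
      have h' : c * 2 = k * (k - 1) := Finset.sum_range_id_mul_two k
      have h'' : ((c * 2 : ℕ) : ℝ) = ((k * (k - 1) : ℕ) : ℝ) := by exact_mod_cast h'
      push_cast [Nat.cast_sub (show 1 ≤ k by omega)] at h''
      linarith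
    have hmain : ((k : ℝ) + 1) * L ≤ (c : ℝ) * p n := by
      have h2cp : (c : ℝ) * 2 * p n = (k : ℝ) * ((k : ℝ) - 1) * p n := by rw [h2c]
      have f1 : ((k : ℝ) - 1) * L ^ 2 ≤ ((k : ℝ) - 1) * ((k : ℝ) * p n) :=
        mul_le_mul_of_nonneg_left hkp (by linarith)
      have f2 : 4 * L ≤ L ^ 2 := by nlinarith
      have f2' : ((k : ℝ) - 1) * (4 * L) ≤ ((k : ℝ) - 1) * L ^ 2 :=
        mul_le_mul_of_nonneg_left f2 (by linarith)
      have f3 : 0 ≤ ((k : ℝ) - 3) * L := mul_nonneg (by linarith) hL0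
      nlinarith [h2cp, f1, f2', f3]
    have hpow : (n : ℝ) ^ k * (1 - p n) ^ c ≤ (n : ℝ)⁻¹ := by
      have e1 : (n : ℝ) ^ k = Real.exp ((k : ℝ) * L) := by
        rw [hL, Real.exp_nat_mul, Real.exp_log hn0]
      have e2 : (1 - p n) ^ c ≤ Real.exp ((c : ℝ) * (-(p n))) := by
        rw [Real.exp_nat_mul]
        refine pow_le_pow_left₀ (by linarith [hp1 n]) ?_ c
        have := Real.add_one_le_exp (-(p n))
        linarith
      calc (n : ℝ) ^ k * (1 - p n) ^ c
          ≤ Real.exp ((k : ℝ) * L) * Real.exp ((c : ℝ) * (-(p n))) := by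
            rw [e1]
            exact mul_le_mul_of_nonneg_left e2 (le_of_lt (Real.exp_pos _))
        _ = Real.exp ((k : ℝ) * L + (c : ℝ) * (-(p n))) := (Real.exp_add _ _).symm
        _ ≤ Real.exp (-L) := by
            apply Real.exp_le_exp.mpr
            nlinarith [hmain]
        _ = (n : ℝ)⁻¹ := by rw [Real.exp_neg, hL, Real.exp_log hn0]
    have hF : 1 - (n : ℝ)⁻¹ ≤ digraphProb n (p n)
        (fun D => ∀ S : Finset (Fin n), S.card = k → hasCycleIn D S) := by
      rw [digraphProb_compl (hp0 n) (hp1 n)]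
      have hb : digraphProb n (p n)
          (fun D => ¬ ∀ S : Finset (Fin n), S.card = k → hasCycleIn D S)
          ≤ (n : ℝ) ^ k * (1 - p n) ^ c := by
        refine le_trans (digraphProb_mono (hp0 n) (hp1 n) ?_)
          (prob_bad (hp0 n) (hp1 n) k)
        intro D hD
        push_neg at hD
        exact hD
      linarith [hb.trans hpow]
    exact le_trans hF (digraphProb_mono (hp0 n) (hp1 n) (fun D h => hFG n D h))
  have hlim : Tendsto (fun n : ℕ => 1 - (n : ℝ)⁻¹) atTop (nhds 1) := by
    have h0 := tendsto_inv_atTop_nhds_zero_nat (𝕜 := ℝ)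
    have := (tendsto_const_nhds (x := (1 : ℝ)) (f := atTop)).sub h0
    simpa using this
  exact tendsto_of_tendsto_of_tendsto_of_le_of_le' hlim tendsto_const_nhds hlower
    (Eventually.of_forall hupper)
end
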